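/- Let X be an ω-complete partial order with a least element, ι and κ finite types, and let s : (ι → X) → (κ → X) be ω-continuous (for every monotone sequence c : ℕ → (ι → X), s (ωSup c) is the least upper bound of {s (c n) | n ∈ ℕ}). Fix i : ι and o : κ, and let φ : (ι → X) → X be such that for every 𝐱, φ 𝐱 is the least element of {y : X | s (Function.update 𝐱 i y) o = y}. Then φ is ω-continuous: for every monotone sequence c : ℕ → (ι → X), φ (ωSup c) is the least upper bound of {φ (c n) | n ∈ ℕ}. -/

import Mathlib

open OmegaCompletePartialOrder

section Stmt6Aux

variable {X : Type*} [OmegaCompletePartialOrder X] [OrderBot X]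
  {ι κ : Type*} [DecidableEq ι]

private lemma isLUB_ωSup' (c : Chain X) : IsLUB (Set.range fun n => c n) (ωSup c) := by
  constructor
  · rintro x ⟨n, rfl⟩; exact le_ωSup c n
  · intro u hu; exact ωSup_le c u fun n => hu ⟨n, rfl⟩

/-- Kleene iterates. -/
private def FIter (s : (ι → X) → (κ → X)) (i : ι) (o : κ) (xs : ι → X) : ℕ → X :=
  fun k => (fun y => s (Function.update xs i y) o)^[k] ⊥

private lemma FIter_succ (s : (ι → X) → (κ → X)) (i : ι) (o : κ) (xs : ι → X) (k : ℕ) :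
    FIter s i o xs (k + 1) = s (Function.update xs i (FIter s i o xs k)) o := by
  simp [FIter, Function.iterate_succ_apply']

variable {s : (ι → X) → (κ → X)}
  (hs : ∀ c : Chain (ι → X), IsLUB (Set.range fun n => s (c n)) (s (ωSup c)))
  {i : ι} {o : κ}

include hs

private lemma s_mono {a b : ι → X} (hab : a ≤ b) : s a ≤ s b := by
  let c : Chain (ι → X) :=
    ⟨fun n => if n = 0 then a else b, by
      intro n m hnm
      dsimp only
      by_cases hn : n = 0 <;> by_cases hm : m = 0 <;> simp [hn, hm, hab] <;> omega⟩
  have hωb : ωSup c = b := by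
    refine (isLUB_ωSup' c).unique ?_
    constructor
    · rintro x ⟨n, rfl⟩
      show (if n = 0 then a else b) ≤ b
      by_cases hn : n = 0 <;> simp [hn, hab]
    · intro u hu
      have h1 : (if (1 : ℕ) = 0 then a else b) ≤ u := hu ⟨1, rfl⟩
      simpa using h1
  have h0 : s a ≤ s (ωSup c) := (hs c).1 ⟨0, rfl⟩
  rwa [hωb] at h0

private lemma s_ωSup_apply (d : Chain (ι → X)) :
    IsLUB (Set.range fun n => s (d n) o) (s (ωSup d) o) := by
  have h := (isLUB_pi.mp (hs d)) o
  have : Function.eval o '' (Set.range fun n => s (d n)) = Set.range fun n => s (d n) o := by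
    rw [← Set.range_comp]; rfl
  rwa [this] at h

omit hs

private lemma update_isLUB (c : Chain (ι → X)) (y : Chain X) :
    IsLUB (Set.range fun n => Function.update (c n) i (y n))
      (Function.update (ωSup c) i (ωSup y)) := by
  rw [isLUB_pi]
  intro j
  have hrange : Function.eval j '' (Set.range fun n => Function.update (c n) i (y n))
      = Set.range fun n => Function.update (c n) i (y n) j := by
    rw [← Set.range_comp]; rfl
  rw [hrange]
  by_cases hj : j = i
  · subst hj
    simpa using isLUB_ωSup' y
  · have h := (isLUB_pi.mp (isLUB_ωSup' c)) j
    have hr : Function.eval j '' (Set.range fun n => c n) = Set.range fun n => c n j := by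
      rw [← Set.range_comp]; rfl
    rw [hr] at h
    simpa [Function.update_of_ne hj] using h

private lemma ωSup_const (x : ι → X) :
    ωSup (⟨fun _ => x, monotone_const⟩ : Chain (ι → X)) = x :=
  le_antisymm (ωSup_le _ _ fun _ => le_rfl) (le_ωSup (⟨fun _ => x, monotone_const⟩ : Chain (ι → X)) 0)

include hs

private lemma FIter_mono_k (xs : ι → X) : Monotone (FIter s i o xs) := by
  apply monotone_nat_of_le_succ
  intro k
  induction k with
  | zero => exact bot_le
  | succ k ih =>
      have h1 : Function.update xs i (FIter s i o xs k) ≤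
          Function.update xs i (FIter s i o xs (k + 1)) := by
        intro j
        by_cases hj : j = i
        · subst hj; simpa using ih
        · simp [Function.update_of_ne hj]
      rw [FIter_succ, FIter_succ]
      exact s_mono hs h1 o

private lemma FIter_mono_xs {a b : ι → X} (hab : a ≤ b) (k : ℕ) :
    FIter s i o a k ≤ FIter s i o b k := by
  induction k with
  | zero => exact le_rfl
  | succ k ih =>
      have : Function.update a i (FIter s i o a k) ≤
          Function.update b i (FIter s i o b k) := by
        intro j
        by_cases hj : j = i
        · subst hj; simpa using ih
        · simpa [Function.update_of_ne hj] using hab j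
      rw [FIter_succ, FIter_succ]
      exact s_mono hs this o

variable {φ : (ι → X) → X}
  (hφ : ∀ xs : ι → X, IsLeast {y : X | s (Function.update xs i y) o = y} (φ xs))

include hφ

private lemma FIter_le_φ (xs : ι → X) (k : ℕ) : FIter s i o xs k ≤ φ xs := by
  induction k with
  | zero => exact bot_le
  | succ k ih =>
      have h1 : Function.update xs i (FIter s i o xs k) ≤ Function.update xs i (φ xs) := by
        intro j
        by_cases hj : j = i
        · subst hj; simpa using ih
        · simp [Function.update_of_ne hj]
      calc FIter s i o xs (k + 1) = s (Function.update xs i (FIter s i o xs k)) o :=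
            FIter_succ s i o xs k
        _ ≤ s (Function.update xs i (φ xs)) o := s_mono hs h1 o
        _ = φ xs := (hφ xs).1

private lemma φ_eq_ωSup (xs : ι → X) :
    φ xs = ωSup (⟨FIter s i o xs, FIter_mono_k hs xs⟩ : Chain X) := by
  set Fc : Chain X := ⟨FIter s i o xs, FIter_mono_k hs xs⟩ with hFc
  -- the constant chain at xs
  set cc : Chain (ι → X) := ⟨fun _ => xs, monotone_const⟩ with hcc
  set d : Chain (ι → X) :=
    ⟨fun n => Function.update xs i (FIter s i o xs n), fun n m hnm => by
      intro j
      by_cases hj : j = i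
      · subst hj; simpa using FIter_mono_k hs xs hnm
      · simp [Function.update_of_ne hj]⟩ with hd
  have hωd : ωSup d = Function.update xs i (ωSup Fc) := by
    refine (isLUB_ωSup' d).unique ?_
    have := update_isLUB (i := i) cc Fc
    simp only [hcc, ωSup_const] at this; exact this
  -- ωSup Fc is a fixed point
  have hfix : s (Function.update xs i (ωSup Fc)) o = ωSup Fc := by
    rw [← hωd]
    refine (s_ωSup_apply hs d).unique ?_
    have hdo : ∀ n, s (d n) o = FIter s i o xs (n + 1) := fun n => by
      rw [FIter_succ]; rfl
    constructor
    · rintro x ⟨n, rfl⟩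
      show s (d n) o ≤ ωSup Fc
      rw [hdo n]
      exact le_ωSup Fc (n + 1)
    · intro u hu
      refine ωSup_le Fc u fun n => ?_
      have h1 : FIter s i o xs n ≤ FIter s i o xs (n + 1) := FIter_mono_k hs xs (Nat.le_succ n)
      exact h1.trans ((hdo n) ▸ hu ⟨n, rfl⟩)
  refine le_antisymm ?_ ?_
  · exact (hφ xs).2 hfix
  · exact ωSup_le Fc _ fun n => FIter_le_φ hs hφ xs n

private lemma φ_mono {a b : ι → X} (hab : a ≤ b) : φ a ≤ φ b := by
  rw [φ_eq_ωSup hs hφ a, φ_eq_ωSup hs hφ b]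
  exact ωSup_le _ _ fun n =>
    le_trans (FIter_mono_xs hs hab n)
      (le_ωSup (⟨FIter s i o b, FIter_mono_k hs b⟩ : Chain X) n)

end Stmt6Aux

/-- For an ω-continuous system `s` over an ω-CPO with least element, the map
`φ` sending each input tuple to the least fixed point arising from connecting
input interface `i` to output interface `o` is itself ω-continuous. -/
theorem stmt_6 {X : Type*} [OmegaCompletePartialOrder X] [OrderBot X]
    {ι κ : Type*} [Fintype ι] [Fintype κ] [DecidableEq ι]
    (s : (ι → X) → (κ → X))
    (hs : ∀ c : Chain (ι → X),
      IsLUB (Set.range fun n => s (c n)) (s (ωSup c)))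
    (i : ι) (o : κ) (φ : (ι → X) → X)
    (hφ : ∀ xs : ι → X, IsLeast {y : X | s (Function.update xs i y) o = y} (φ xs)) :
    ∀ c : Chain (ι → X),
      IsLUB (Set.range fun n => φ (c n)) (φ (ωSup c)) := by
  intro c
  -- the chains m ↦ FIter s i o (c m) k
  have Gmono : ∀ k, Monotone fun m => FIter s i o (c m) k := fun k _ _ hnm =>
    FIter_mono_xs hs (c.monotone hnm) k
  -- diagonal identity
  have key : ∀ k, FIter s i o (ωSup c) k =
      ωSup (⟨fun m => FIter s i o (c m) k, Gmono k⟩ : Chain X) := by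
    intro k
    induction k with
    | zero =>
        refine le_antisymm bot_le (ωSup_le _ _ fun m => ?_)
        exact le_of_eq rfl
    | succ k ih =>
        set G : Chain X := ⟨fun m => FIter s i o (c m) k, Gmono k⟩ with hG
        set d : Chain (ι → X) :=
          ⟨fun m => Function.update (c m) i (FIter s i o (c m) k), fun n m hnm => by
            intro j
            by_cases hj : j = i
            · subst hj; simpa using Gmono k hnm
            · simpa [Function.update_of_ne hj] using c.monotone hnm j⟩ with hd
        have hωd : ωSup d = Function.update (ωSup c) i (ωSup G) := by
          refine (isLUB_ωSup' d).unique ?_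
          exact update_isLUB c G
        have step1 : FIter s i o (ωSup c) (k + 1)
            = s (Function.update (ωSup c) i (ωSup G)) o := by
          rw [FIter_succ, ih]
        have hdo : ∀ m, s (d m) o = FIter s i o (c m) (k + 1) := fun m => by
          rw [FIter_succ]; rfl
        rw [step1, ← hωd]
        refine (s_ωSup_apply hs d).unique ?_
        constructor
        · rintro x ⟨m, rfl⟩
          show s (d m) o ≤ ωSup (⟨fun m => FIter s i o (c m) (k + 1), Gmono (k + 1)⟩ : Chain X)
          rw [hdo m]
          exact le_ωSup (⟨fun m => FIter s i o (c m) (k + 1), Gmono (k + 1)⟩ : Chain X) m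
        · intro u hu
          refine ωSup_le _ u fun m => ?_
          exact le_of_eq (hdo m).symm |>.trans (hu ⟨m, rfl⟩)
  constructor
  · rintro x ⟨n, rfl⟩
    exact φ_mono hs hφ (le_ωSup c n)
  · intro u hu
    rw [φ_eq_ωSup hs hφ (ωSup c)]
    refine ωSup_le _ u fun k => ?_
    show FIter s i o (ωSup c) k ≤ u
    rw [key k]
    refine ωSup_le _ u fun m => ?_
    exact (FIter_le_φ hs hφ (c m) k).trans (hu ⟨m, rfl⟩)
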